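/- For every real κ with 1 < κ ≤ 2 and every vector w ∈ ℝ⁵ satisfying ⟨w, w⟩ = 1, ⟨w_x, w⟩ = −1, ⟨w_c, w⟩ = −1, ⟨w_f, w⟩ = −1, ⟨w_c*, w⟩ = 1 and ⟨w_z, w⟩ = √(3 + 2√κ − κ), one has ⟨w_{-c}, w⟩ = −1 − 2√κ and ⟨w_{-f}, w⟩ = 3 − 4/√κ − 8/κ, and both of these values are strictly less than −1; that is, the bridge ball is disjoint from the balls b_{-c} and b_{-f} of the pyramidal ball packing. -/

import Mathlib

noncomputable section

/-- The Lorentzian product on ℝ⁵: ⟨u,v⟩ = u₁v₁ + u₂v₂ + u₃v₃ + u₄v₄ − u₅v₅. -/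
def lprod5 (u v : Fin 5 → ℝ) : ℝ :=
  u 0 * v 0 + u 1 * v 1 + u 2 * v 2 + u 3 * v 3 - u 4 * v 4

/-- Inversive coordinates of the blow-ups to ℝ³ of the standard pyramidal disk
packing, its mirror and tangency disks, and the half-space `{z ≥ 0}`. -/
def wx : Fin 5 → ℝ := ![0, -1, 0, 1, 1]
def wc (κ : ℝ) : Fin 5 → ℝ := ![0, 1 - κ, 0, -1, κ - 1]
def wf (κ : ℝ) : Fin 5 → ℝ := ![2 / Real.sqrt κ, 0, 0, 2 / κ - 1, 2 / κ]
def wmc : Fin 5 → ℝ := ![0, 1, 0, 1, 1]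
def wmf (κ : ℝ) : Fin 5 → ℝ := ![-(2 / Real.sqrt κ), 0, 0, 2 / κ - 1, 2 / κ]
def wcs (κ : ℝ) : Fin 5 → ℝ :=
  ![0, -(Real.sqrt κ / 2), 0, -(1 / Real.sqrt κ), (κ - 2) / (2 * Real.sqrt κ)]
def wt (κ : ℝ) : Fin 5 → ℝ :=
  ![0, -(2 / Real.sqrt (κ ^ 2 + 4)), 0, κ / Real.sqrt (κ ^ 2 + 4), 0]
def wz : Fin 5 → ℝ := ![0, 0, 1, 0, 0]

/-- For `1 < κ ≤ 2`, the bridge ball is disjoint from the balls `b₋c` and `b₋f`: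
`⟨w₋c, w⟩ = −1 − 2√κ < −1` and `⟨w₋f, w⟩ = 3 − 4/√κ − 8/κ < −1`. -/
theorem bridge_ball_disjoint (κ : ℝ) (hκ1 : 1 < κ) (hκ2 : κ ≤ 2)
    (w : Fin 5 → ℝ)
    (hww : lprod5 w w = 1) (hx : lprod5 wx w = -1) (hc : lprod5 (wc κ) w = -1)
    (hf : lprod5 (wf κ) w = -1) (hcs : lprod5 (wcs κ) w = 1)
    (hz : lprod5 wz w = Real.sqrt (3 + 2 * Real.sqrt κ - κ)) :
    lprod5 wmc w = -1 - 2 * Real.sqrt κ ∧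
    lprod5 (wmf κ) w = 3 - 4 / Real.sqrt κ - 8 / κ ∧
    -1 - 2 * Real.sqrt κ < -1 ∧
    3 - 4 / Real.sqrt κ - 8 / κ < -1 := by
  have hκ0 : (0:ℝ) < κ := lt_trans one_pos hκ1
  obtain ⟨s, hs0, rfl⟩ : ∃ s : ℝ, 0 < s ∧ s ^ 2 = κ :=
    ⟨Real.sqrt κ, Real.sqrt_pos.mpr hκ0, Real.sq_sqrt hκ0.le⟩
  have hsq : Real.sqrt (s ^ 2) = s := Real.sqrt_sq hs0.le
  have hs0' : s ≠ 0 := hs0.ne'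
  simp only [lprod5, wx, wc, wf, wmc, wmf, wcs, wz, hsq, Matrix.cons_val_zero,
    Matrix.cons_val_one, Matrix.head_cons, Matrix.cons_val_two, Matrix.tail_cons,
    Matrix.cons_val_three, Matrix.cons_val_four] at hx hc hf hcs ⊢
  have hcs2 : s ^ 2 * w 1 + 2 * w 3 + (s ^ 2 - 2) * w 4 = -(2 * s) := by
    field_simp at hcs
    nlinarith [hcs]
  have hd : s ^ 2 * w 3 = 2 - s ^ 2 := by linear_combination (s ^ 2 - 1) * hx - hc
  have he : s ^ 2 * w 4 = s ^ 3 + 2 := by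
    linear_combination (s ^ 2 / 2 - 1) * hx + (-1 - s ^ 2 / 2) * hc + (-(s ^ 2 / 2)) * hcs2
  refine ⟨?_, ?_, ?_, ?_⟩
  · linear_combination hc + hcs2
  · field_simp at hf ⊢
    have key : s ^ 2 * (2 * (2 - s ^ 2) * w 3 - 4 * w 4) = s ^ 2 * (2 * s ^ 2 - 4 * s - 8) := by
      linear_combination 2 * (2 - s ^ 2) * hd - 4 * he
    linear_combination (-1) * hf + mul_left_cancel₀ (pow_ne_zero 2 hs0') key
  · linarith
  · have hs2 : s ^ 2 ≤ 2 := hκ2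
    have h1 : (4:ℝ) ≤ 8 / s ^ 2 := by
      rw [le_div_iff₀ (by positivity : (0:ℝ) < s ^ 2)]; linarith
    have h2 : (0:ℝ) < 4 / s := by positivity
    linarith
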